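/- There exists a constant C such that for all n ∈ ℕ, all t ∈ [0,1], and all θ ∈ ℝ with 0 < |θ| < nπ, setting m := ⌊nt⌋, one has | ∑_{ℓ=−m}^{m} |ℓ|·(m − |ℓ|)² · e^{iℓθ/n} | ≤ C · n⁴ · t² · min{ t² , 1/θ² }. -/

import Mathlib

open Finset

private def aZ (m : ℕ) (ℓ : ℤ) : ℤ :=
  if |ℓ| ≤ (m : ℤ) then |ℓ| * ((m : ℤ) - |ℓ|) ^ 2 else 0

private def cZ (m : ℕ) (ℓ : ℤ) : ℤ := aZ m ℓ - 2 * aZ m (ℓ - 1) + aZ m (ℓ - 2)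

private lemma aZ_eq_zero (m : ℕ) (ℓ : ℤ) (h : ¬ |ℓ| ≤ (m:ℤ)) : aZ m ℓ = 0 := if_neg h

private lemma aZ_abs_le (m : ℕ) (ℓ : ℤ) : |aZ m ℓ| ≤ (m:ℤ)^3 := by
  unfold aZ
  split_ifs with h
  · have h0 := abs_nonneg ℓ
    have hm0 : (0:ℤ) ≤ (m:ℤ) := by positivity
    have hb : (0:ℤ) ≤ (m:ℤ) - |ℓ| := by omega
    rw [abs_le]
    constructor
    · nlinarith [mul_nonneg h0 (sq_nonneg ((m:ℤ) - |ℓ|)), pow_nonneg hm0 3]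
    · nlinarith [mul_nonneg (mul_nonneg h0 h0) h0, mul_nonneg (mul_nonneg h0 h0) hb,
        mul_nonneg (mul_nonneg h0 hb) hb, mul_nonneg (mul_nonneg hb hb) hb]
  · rw [abs_zero]; positivity

private lemma cZ_bound (m : ℕ) (hm : 1 ≤ (m:ℤ)) (ℓ : ℤ) (h1 : -(m:ℤ) ≤ ℓ) (h2 : ℓ ≤ (m:ℤ) + 2) :
    |cZ m ℓ| ≤ if ℓ = 1 then 2 * (m:ℤ)^2 else 6 * (m:ℤ) := by
  by_cases hℓ1 : ℓ = 1
  · subst hℓ1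
    rw [if_pos rfl]
    unfold cZ aZ
    rw [abs_le]
    norm_num
    split_ifs <;> constructor <;> nlinarith
  · rw [if_neg hℓ1]
    unfold cZ aZ
    rw [abs_le]
    rcases le_or_gt ℓ 0 with hneg | hpos
    · rw [abs_of_nonpos hneg, abs_of_nonpos (by omega : ℓ - 1 ≤ 0),
        abs_of_nonpos (by omega : ℓ - 2 ≤ 0)]
      split_ifs <;>
        first
          | (exfalso; omega)
          | (constructor <;> linarith)
          | (have hx : ℓ = 1 - (m:ℤ) := by omega
             subst hx; constructor <;> nlinarith)
          | (have hx : ℓ = -(m:ℤ) := by omega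
             subst hx; constructor <;> nlinarith)
    · have h2' : 2 ≤ ℓ := by omega
      rw [abs_of_nonneg (by omega : (0:ℤ) ≤ ℓ), abs_of_nonneg (by omega : (0:ℤ) ≤ ℓ - 1),
        abs_of_nonneg (by omega : (0:ℤ) ≤ ℓ - 2)]
      split_ifs <;>
        first
          | (exfalso; omega)
          | (constructor <;> linarith)
          | (have hx : ℓ = (m:ℤ) + 1 := by omega
             subst hx; constructor <;> nlinarith)
          | (have hx : ℓ = (m:ℤ) + 2 := by omega
             subst hx; constructor <;> nlinarith)

private lemma shift_sum (m : ℕ) (z : ℂ) (hz : z ≠ 0) (j : ℤ) (hj0 : 0 ≤ j) (hj2 : j ≤ 2) :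
    z ^ j * ∑ ℓ ∈ Icc (-(m:ℤ)) (m:ℤ), (aZ m ℓ : ℂ) * z ^ ℓ
      = ∑ ℓ ∈ Icc (-(m:ℤ)) ((m:ℤ) + 2), (aZ m (ℓ - j) : ℂ) * z ^ ℓ := by
  have h1 : ∑ ℓ ∈ Icc (-(m:ℤ) + j) ((m:ℤ) + j), (aZ m (ℓ - j) : ℂ) * z ^ ℓ
      = z ^ j * ∑ ℓ ∈ Icc (-(m:ℤ)) (m:ℤ), (aZ m ℓ : ℂ) * z ^ ℓ := by
    rw [← Finset.map_add_right_Icc, Finset.sum_map, Finset.mul_sum]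
    refine Finset.sum_congr rfl fun ℓ hℓ => ?_
    simp only [addRightEmbedding_apply, add_sub_cancel_right]
    rw [zpow_add₀ hz]
    ring
  rw [← h1]
  refine Finset.sum_subset ?_ ?_
  · intro x hx
    simp only [Finset.mem_Icc] at hx ⊢
    omega
  · intro x hx hx'
    simp only [Finset.mem_Icc] at hx hx'
    rw [aZ_eq_zero m _ (by rw [abs_le]; omega), Int.cast_zero, zero_mul]

private lemma key_identity (m : ℕ) (z : ℂ) (hz : z ≠ 0) :
    (1 - z) ^ 2 * ∑ ℓ ∈ Icc (-(m:ℤ)) (m:ℤ), (aZ m ℓ : ℂ) * z ^ ℓ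
      = ∑ ℓ ∈ Icc (-(m:ℤ)) ((m:ℤ) + 2), (cZ m ℓ : ℂ) * z ^ ℓ := by
  have e0 := shift_sum m z hz 0 (by norm_num) (by norm_num)
  have e1 := shift_sum m z hz 1 (by norm_num) (by norm_num)
  have e2 := shift_sum m z hz 2 (by norm_num) (by norm_num)
  rw [zpow_zero, one_mul] at e0
  rw [zpow_one] at e1
  have ezz : z ^ (2:ℤ) = z * z := by
    rw [show (2:ℤ) = ((2:ℕ):ℤ) from rfl, zpow_natCast, sq]
  rw [ezz] at e2
  have expand : (1 - z) ^ 2 * ∑ ℓ ∈ Icc (-(m:ℤ)) (m:ℤ), (aZ m ℓ : ℂ) * z ^ ℓ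
      = (∑ ℓ ∈ Icc (-(m:ℤ)) (m:ℤ), (aZ m ℓ : ℂ) * z ^ ℓ)
        - 2 * (z * ∑ ℓ ∈ Icc (-(m:ℤ)) (m:ℤ), (aZ m ℓ : ℂ) * z ^ ℓ)
        + (z * z) * ∑ ℓ ∈ Icc (-(m:ℤ)) (m:ℤ), (aZ m ℓ : ℂ) * z ^ ℓ := by ring
  rw [expand, e2, e1, e0, Finset.mul_sum, ← Finset.sum_sub_distrib, ← Finset.sum_add_distrib]
  refine Finset.sum_congr rfl fun ℓ hℓ => ?_
  unfold cZ
  push_cast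
  ring

private lemma sum_cZ_bound (m : ℕ) (hm : 1 ≤ m) :
    ∑ ℓ ∈ Icc (-(m:ℤ)) ((m:ℤ) + 2), (|cZ m ℓ| : ℝ) ≤ 26 * (m:ℝ)^2 := by
  have h1mem : (1:ℤ) ∈ Icc (-(m:ℤ)) ((m:ℤ) + 2) := by
    simp only [Finset.mem_Icc]; omega
  have hcard : (Icc (-(m:ℤ)) ((m:ℤ) + 2)).card = 2 * m + 3 := by
    rw [Int.card_Icc]
    omega
  calc ∑ ℓ ∈ Icc (-(m:ℤ)) ((m:ℤ) + 2), (|cZ m ℓ| : ℝ)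
      = (|cZ m 1| : ℝ) + ∑ ℓ ∈ (Icc (-(m:ℤ)) ((m:ℤ) + 2)).erase 1, (|cZ m ℓ| : ℝ) :=
        (Finset.add_sum_erase _ _ h1mem).symm
    _ ≤ 2 * (m:ℝ)^2 + (2 * m + 2) * (6 * (m:ℝ)) := by
        gcongr ?_ + ?_
        · have := cZ_bound m (by exact_mod_cast hm) 1 (by omega) (by omega)
          rw [if_pos rfl] at this
          calc (|cZ m 1| : ℝ) ≤ ((2 * (m:ℤ)^2 : ℤ) : ℝ) := by exact_mod_cast this
            _ = 2 * (m:ℝ)^2 := by push_cast; ring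
        · calc ∑ ℓ ∈ (Icc (-(m:ℤ)) ((m:ℤ) + 2)).erase 1, (|cZ m ℓ| : ℝ)
              ≤ ∑ ℓ ∈ (Icc (-(m:ℤ)) ((m:ℤ) + 2)).erase 1, (6 * (m:ℝ)) := by
                refine Finset.sum_le_sum fun ℓ hℓ => ?_
                obtain ⟨hne, hmem⟩ := Finset.mem_erase.1 hℓ
                simp only [Finset.mem_Icc] at hmem
                have := cZ_bound m (by exact_mod_cast hm) ℓ hmem.1 hmem.2
                rw [if_neg hne] at this
                exact_mod_cast this
            _ = ((Icc (-(m:ℤ)) ((m:ℤ) + 2)).erase 1).card * (6 * (m:ℝ)) := by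
                rw [Finset.sum_const, nsmul_eq_mul]
            _ ≤ (2 * m + 2) * (6 * (m:ℝ)) := by
                rw [Finset.card_erase_of_mem h1mem, hcard]
                norm_num
    _ ≤ 26 * (m:ℝ)^2 := by
        have : (1:ℝ) ≤ m := by exact_mod_cast hm
        nlinarith

private lemma two_sub_two_cos (x : ℝ) (hx : |x| ≤ Real.pi) :
    4 / Real.pi ^ 2 * x ^ 2 ≤ 2 - 2 * Real.cos x := by
  have h := Real.cos_le_one_sub_mul_cos_sq hx
  have e : 4 / Real.pi ^ 2 * x ^ 2 = 2 * (2 / Real.pi ^ 2 * x ^ 2) := by ring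
  rw [e]
  linarith

private lemma normSq_one_sub_exp (x : ℝ) :
    Complex.normSq (1 - Complex.exp (x * Complex.I)) = 2 - 2 * Real.cos x := by
  rw [Complex.exp_mul_I]
  simp only [Complex.normSq_apply, Complex.sub_re, Complex.sub_im, Complex.one_re,
    Complex.one_im, Complex.add_re, Complex.add_im, Complex.mul_re, Complex.mul_im,
    Complex.I_re, Complex.I_im, Complex.cos_ofReal_re, Complex.cos_ofReal_im,
    Complex.sin_ofReal_re, Complex.sin_ofReal_im]
  ring_nf
  nlinarith [Real.sin_sq_add_cos_sq x]

/-- there is a constant `C` such that for all `n ∈ ℕ`, `t ∈ [0,1]`,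
`0 < |θ| < nπ`, with `m := ⌊nt⌋`:
`|∑_{ℓ=-m}^{m} |ℓ|(m-|ℓ|)² e^{iℓθ/n}| ≤ C n⁴ t² min{t², 1/θ²}`. -/
theorem stmt_13 :
    ∃ C : ℝ, 0 < C ∧
      ∀ (n : ℕ) (t θ : ℝ) (m : ℕ), m = ⌊(n : ℝ) * t⌋₊ →
        t ∈ Set.Icc (0:ℝ) 1 → 0 < |θ| → |θ| < (n : ℝ) * Real.pi →
        ‖(∑ ℓ ∈ Finset.Icc (-(m : ℤ)) (m : ℤ),
            ((|ℓ| : ℤ) : ℂ) * ((((m : ℤ) - |ℓ| : ℤ) : ℂ)) ^ 2 *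
              Complex.exp (Complex.I * (ℓ : ℂ) * ((θ / n : ℝ) : ℂ)))‖
          ≤ C * (n : ℝ) ^ 4 * t ^ 2 * min (t ^ 2) (1 / θ ^ 2) := by
  refine ⟨100, by norm_num, ?_⟩
  intro n t θ m hm ht hθ0 hθπ
  obtain ⟨ht0, ht1⟩ := ht
  -- basic positivity facts
  have hπ := Real.pi_pos
  have hn : 0 < n := by
    by_contra hn
    push_neg at hn
    interval_cases n
    simp at hθπ
    linarith
  have hn0 : (0:ℝ) < n := by exact_mod_cast hn
  have hθne : θ ≠ 0 := by
    intro h; rw [h] at hθ0; simp at hθ0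
  have hθ2 : (0:ℝ) < θ^2 := by positivity
  set x : ℝ := θ / n with hxdef
  have hxne : x ≠ 0 := div_ne_zero hθne (ne_of_gt hn0)
  have hxabs : |x| ≤ Real.pi := by
    rw [hxdef, abs_div, abs_of_pos hn0]
    rw [div_le_iff₀ hn0]
    rw [mul_comm] at hθπ
    exact le_of_lt hθπ
  set z : ℂ := Complex.exp ((x:ℂ) * Complex.I) with hzdef
  have hz : z ≠ 0 := Complex.exp_ne_zero _
  have hz1 : ‖z‖ = 1 := Complex.norm_exp_ofReal_mul_I x
  -- rewrite the sum
  have hS : (∑ ℓ ∈ Finset.Icc (-(m : ℤ)) (m : ℤ),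
        ((|ℓ| : ℤ) : ℂ) * ((((m : ℤ) - |ℓ| : ℤ) : ℂ)) ^ 2 *
          Complex.exp (Complex.I * (ℓ : ℂ) * ((θ / n : ℝ) : ℂ)))
      = ∑ ℓ ∈ Icc (-(m:ℤ)) (m:ℤ), (aZ m ℓ : ℂ) * z ^ ℓ := by
    refine Finset.sum_congr rfl fun ℓ hℓ => ?_
    simp only [Finset.mem_Icc] at hℓ
    have habs : |ℓ| ≤ (m:ℤ) := by rw [abs_le]; exact hℓ
    rw [show (aZ m ℓ : ℂ) = ((|ℓ| : ℤ) : ℂ) * ((((m : ℤ) - |ℓ| : ℤ) : ℂ)) ^ 2 by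
      rw [aZ, if_pos habs]; push_cast; ring]
    congr 1
    rw [hzdef, ← Complex.exp_int_mul]
    congr 1
    rw [← hxdef]
    push_cast
    ring
  rw [hS]
  set S : ℂ := ∑ ℓ ∈ Icc (-(m:ℤ)) (m:ℤ), (aZ m ℓ : ℂ) * z ^ ℓ with hSdef
  -- dispose of the trivial case m = 0
  rcases Nat.eq_zero_or_pos m with hm0 | hm1
  · subst hm0
    have hS0 : S = 0 := by
      simp [hSdef, aZ]
    rw [hS0, norm_zero]
    rcases le_total (t^2) (1/θ^2) with h | h
    · rw [min_eq_left h]; positivity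
    · rw [min_eq_right h]; positivity
  -- now m ≥ 1
  have hm1' : (1:ℝ) ≤ m := by exact_mod_cast hm1
  have hmnt : (m:ℝ) ≤ (n:ℝ) * t := by
    rw [hm]
    exact Nat.floor_le (by positivity)
  have hm2nt : (m:ℝ)^2 ≤ ((n:ℝ)*t)^2 := by
    apply pow_le_pow_left₀ (by positivity) hmnt
  -- Bound A : |S| ≤ 3 m⁴
  have habsle : ∀ ℓ ∈ Icc (-(m:ℤ)) (m:ℤ), ‖(aZ m ℓ : ℂ) * z ^ ℓ‖ ≤ (m:ℝ)^3 := by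
    intro ℓ hℓ
    rw [norm_mul, norm_zpow, hz1, one_zpow, mul_one, Complex.norm_intCast]
    calc |((aZ m ℓ : ℤ) : ℝ)| = ((|aZ m ℓ| : ℤ) : ℝ) := by rw [Int.cast_abs]
      _ ≤ (((m:ℤ)^3 : ℤ) : ℝ) := by exact_mod_cast aZ_abs_le m ℓ
      _ = (m:ℝ)^3 := by push_cast; ring
  have hcard : (Icc (-(m:ℤ)) (m:ℤ)).card = 2*m+1 := by
    rw [Int.card_Icc]; omega
  have hA : ‖S‖ ≤ 3 * (m:ℝ)^4 := by
    calc ‖S‖ ≤ ∑ ℓ ∈ Icc (-(m:ℤ)) (m:ℤ), ‖(aZ m ℓ : ℂ) * z ^ ℓ‖ :=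
          norm_sum_le _ _
      _ ≤ ∑ ℓ ∈ Icc (-(m:ℤ)) (m:ℤ), (m:ℝ)^3 := Finset.sum_le_sum habsle
      _ = ((2*m+1 : ℕ) : ℝ) * (m:ℝ)^3 := by
          rw [Finset.sum_const, nsmul_eq_mul, hcard]
      _ ≤ 3 * (m:ℝ)^4 := by
          push_cast
          nlinarith [mul_nonneg (pow_nonneg (by positivity : (0:ℝ) ≤ (m:ℝ)) 3)
            (sub_nonneg.2 hm1')]
  -- Bound B : |S| ≤ ... /θ²
  have hd : 4 / Real.pi ^ 2 * x ^ 2 ≤ Complex.normSq (1 - z) := by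
    rw [hzdef, normSq_one_sub_exp]
    exact two_sub_two_cos x hxabs
  have hdpos : 0 < 4 / Real.pi ^ 2 * x ^ 2 := by positivity
  have hT : ‖(1 - z)^2 * S‖ ≤ 26 * (m:ℝ)^2 := by
    rw [hSdef, key_identity m z hz]
    calc ‖∑ ℓ ∈ Icc (-(m:ℤ)) ((m:ℤ)+2), (cZ m ℓ : ℂ) * z ^ ℓ‖
        ≤ ∑ ℓ ∈ Icc (-(m:ℤ)) ((m:ℤ)+2), ‖(cZ m ℓ : ℂ) * z ^ ℓ‖ :=
          norm_sum_le _ _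
      _ = ∑ ℓ ∈ Icc (-(m:ℤ)) ((m:ℤ)+2), (|cZ m ℓ| : ℝ) := by
          refine Finset.sum_congr rfl fun ℓ hℓ => ?_
          rw [norm_mul, norm_zpow, hz1, one_zpow, mul_one, Complex.norm_intCast]
      _ ≤ 26 * (m:ℝ)^2 := sum_cZ_bound m hm1
  have hkey : ‖S‖ * (4 / Real.pi ^ 2 * x ^ 2) ≤ 26 * (m:ℝ)^2 := by
    calc ‖S‖ * (4 / Real.pi ^ 2 * x ^ 2)
        ≤ ‖S‖ * Complex.normSq (1 - z) := by
          gcongr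
      _ = ‖(1 - z)^2 * S‖ := by
          rw [norm_mul, norm_pow, Complex.sq_norm, mul_comm]
      _ ≤ 26 * (m:ℝ)^2 := hT
  have hπ10 : Real.pi ^ 2 ≤ 10 := by nlinarith [Real.pi_lt_d2, Real.pi_pos]
  have hB : ‖S‖ ≤ 100 * (n:ℝ)^4 * t^2 * (1/θ^2) := by
    rw [← mul_le_mul_iff_of_pos_right hdpos]
    refine hkey.trans ?_
    have hx2 : x^2 = θ^2 / (n:ℝ)^2 := by rw [hxdef, div_pow]
    rw [hx2]
    have heq : 100 * (n:ℝ)^4 * t^2 * (1/θ^2) * (4 / Real.pi ^ 2 * (θ^2 / (n:ℝ)^2))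
        = 400 * (n:ℝ)^2 * t^2 / Real.pi^2 := by
      field_simp
      ring
    rw [heq]
    rw [le_div_iff₀ (by positivity : (0:ℝ) < Real.pi^2)]
    nlinarith [hm2nt, sq_nonneg ((n:ℝ)*t)]
  -- combine
  rcases le_total (t^2) (1/θ^2) with h | h
  · rw [min_eq_left h]
    refine hA.trans ?_
    have h4 : (m:ℝ)^4 ≤ ((n:ℝ)*t)^4 := pow_le_pow_left₀ (by positivity) hmnt 4
    have e4 : ((n:ℝ)*t)^4 = (n:ℝ)^4 * t^2 * t^2 := by ring
    have hA0 : (0:ℝ) ≤ (n:ℝ)^4 * t^2 * t^2 := by positivity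
    calc (3:ℝ) * (m:ℝ)^4 ≤ 3 * ((n:ℝ)^4 * t^2 * t^2) := by rw [← e4]; linarith
      _ ≤ 100 * (n:ℝ)^4 * t^2 * t^2 := by linarith
  · rw [min_eq_right h]
    exact hB
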